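/- Let Γ = (V, E, s, r) be a finite directed graph with a specialization γ. Two vertices v, w ∈ V are connected in the undirected graph (V, γ̃(V)) if and only if they have a common special descendant in Γ. -/

import Mathlib

/-- Let `(V, E, s, r)` be a finite directed graph with a specialization `γ`
(a map from non-sink vertices to edges with `s (γ v) = v`; special edges are those in the
image of `γ`). Two vertices `v, w ∈ V` are connected in the undirected graph
`(V, γ̃(V))` (whose edges are the special edges with directions forgotten) if and only if
they have a common special descendant in the graph, i.e. a vertex reachable from each of
`v` and `w` by a special path or a path of length `0`. -/
theorem connected_iff_common_special_descendant
    {V E : Type*} [Fintype V] [Fintype E]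
    (s r : E → V)
    (γ : {v : V // ∃ e, s e = v} → E)
    (hγ : ∀ v, s (γ v) = v.1)
    (v w : V) :
    Relation.ReflTransGen
        (fun a b => ∃ e, (∃ u, γ u = e) ∧ ((s e = a ∧ r e = b) ∨ (s e = b ∧ r e = a)))
        v w ↔
      ∃ u : V,
        Relation.ReflTransGen (fun a b => ∃ e, (∃ x, γ x = e) ∧ s e = a ∧ r e = b) v u ∧
        Relation.ReflTransGen (fun a b => ∃ e, (∃ x, γ x = e) ∧ s e = a ∧ r e = b) w u := by
  set R : V → V → Prop := fun a b => ∃ e, (∃ x, γ x = e) ∧ s e = a ∧ r e = b with hR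
  -- determinism
  have det : ∀ a b c, R a b → R a c → b = c := by
    rintro a b c ⟨e, ⟨x, hx⟩, hse, hre⟩ ⟨e', ⟨x', hx'⟩, hse', hre'⟩
    have hxv : x.1 = a := by rw [← hγ x, hx, hse]
    have hx'v : x'.1 = a := by rw [← hγ x', hx', hse']
    have : x = x' := Subtype.ext (hxv.trans hx'v.symm)
    subst this
    rw [← hre, ← hre', ← hx, ← hx']
  -- comparability of descendants
  have comp : ∀ a u u', Relation.ReflTransGen R a u → Relation.ReflTransGen R a u' →
      Relation.ReflTransGen R u u' ∨ Relation.ReflTransGen R u' u := by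
    intro a u u' h1
    induction h1 using Relation.ReflTransGen.head_induction_on with
    | refl => intro h2; exact Or.inl h2
    | head hab hbu ih =>
      rename_i a b
      intro h2
      rcases h2.cases_head with heq | ⟨c, hac, hcu'⟩
      · subst heq
        exact Or.inr (Relation.ReflTransGen.head hab hbu)
      · have : c = b := det _ _ _ hac hab
        subst this
        exact ih hcu'
  constructor
  · intro h
    induction h with
    | refl => exact ⟨v, Relation.ReflTransGen.refl, Relation.ReflTransGen.refl⟩
    | tail hvb hbc ih =>
      rename_i b c
      obtain ⟨u, hvu, hbu⟩ := ih
      rcases hbc with ⟨e, he, hdir⟩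
      rcases hdir with ⟨hsb, hrc⟩ | ⟨hsc, hrb⟩
      · -- R b c
        have hbc' : R b c := ⟨e, he, hsb, hrc⟩
        rcases comp b u c hbu (Relation.ReflTransGen.single hbc') with h1 | h2
        · exact ⟨c, hvu.trans h1, Relation.ReflTransGen.refl⟩
        · exact ⟨u, hvu, h2⟩
      · -- R c b
        have hcb : R c b := ⟨e, he, hsc, hrb⟩
        exact ⟨u, hvu, Relation.ReflTransGen.head hcb hbu⟩
  · rintro ⟨u, hvu, hwu⟩
    set S : V → V → Prop :=
      fun a b => ∃ e, (∃ u, γ u = e) ∧ ((s e = a ∧ r e = b) ∨ (s e = b ∧ r e = a)) with hS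
    have symS : Symmetric S := by
      rintro a b ⟨e, he, h⟩; exact ⟨e, he, h.symm⟩
    have mono : ∀ {a b}, Relation.ReflTransGen R a b → Relation.ReflTransGen S a b := by
      intro a b h
      exact Relation.ReflTransGen.mono (r := R) (p := S) (show ∀ x y, R x y → S x y from fun x y ⟨e, he, h1, h2⟩ => ⟨e, he, Or.inl ⟨h1, h2⟩⟩) a b h
    have symRTG : ∀ {a b}, Relation.ReflTransGen S a b → Relation.ReflTransGen S b a := by
      intro a b h
      induction h with
      | refl => exact Relation.ReflTransGen.refl
      | tail _ hbc ih => exact Relation.ReflTransGen.head (symS hbc) ih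
    exact (mono hvu).trans (symRTG (mono hwu))
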